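/- Let u be a nonzero linear functional on 𝒫 satisfying D_{q,ω}(φu) = ψu, where φ(x) = ax² + bx + c has degree at most 2, ψ(x) = dx + e has degree at most 1, and at least one of φ, ψ is not the zero polynomial. If u is regular, then d_n ≠ 0 and φ(−e_n/d_{2n}) ≠ 0 for every integer n ≥ 0. -/

import Mathlib

open Polynomial

noncomputable section

namespace HahnOPSPaper

/-- The algebraic dual of the space of complex polynomials. -/
abbrev PDual : Type := Module.Dual ℂ (Polynomial ℂ)

/-- Left multiplication of a functional by a polynomial: `⟨φu, f⟩ = ⟨u, φf⟩`. -/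
def pMul (φ : Polynomial ℂ) (u : PDual) : PDual := u ∘ₗ LinearMap.mulLeft ℂ φ

/-- Distributional derivative: `⟨Du, f⟩ = -⟨u, f'⟩`. -/
def dDeriv (u : PDual) : PDual :=
  -(u ∘ₗ (Polynomial.derivative : Polynomial ℂ →ₗ[ℂ] Polynomial ℂ))

/-- The q-bracket `[n]_q = 1 + q + ⋯ + q^(n-1)`. -/
def qBracket (q : ℂ) (n : ℕ) : ℂ := ∑ i ∈ Finset.range n, q ^ i

/-- q-factorial `[n]_q!`. -/
def qFact (q : ℂ) (n : ℕ) : ℂ := ∏ i ∈ Finset.range n, qBracket q (i + 1)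

/-- `D` is Hahn's operator `D_{q,ω}`, i.e. the (unique, for `(q,ω) ≠ (1,0)`) linear operator
with `((q-1)x + ω)·(Df)(x) = f(qx+ω) - f(x)`. -/
def IsHahn (q ω : ℂ) (D : Polynomial ℂ →ₗ[ℂ] Polynomial ℂ) : Prop :=
  ∀ f : Polynomial ℂ, (C (q - 1) * X + C ω) * D f = f.comp (C q * X + C ω) - f

/-- The operator `(L_{q,ω} f)(x) = f(qx + ω)`. -/
def Lop (q ω : ℂ) : Polynomial ℂ →ₗ[ℂ] Polynomial ℂ :=
  (aeval (C q * X + C ω)).toLinearMap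

/-- The distributional Hahn operator `D_{q,ω}` on the dual, built from the ordinary operator
`D*_{q,ω} = D_{1/q,-ω/q}`: `⟨D_{q,ω}u, f⟩ = -q⁻¹·⟨u, D*_{q,ω}f⟩`. -/
def hahnDual (q : ℂ) (Dstar : Polynomial ℂ →ₗ[ℂ] Polynomial ℂ) (u : PDual) : PDual :=
  (-q⁻¹) • (u ∘ₗ Dstar)

/-- The distributional operator `L_{q,ω}`: `⟨L_{q,ω}u, f⟩ = q⁻¹·⟨u, L_{1/q,-ω/q}f⟩`. -/
def LDual (q ω : ℂ) (u : PDual) : PDual := q⁻¹ • (u ∘ₗ Lop q⁻¹ (-ω / q))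

/-- A functional is regular if it admits a monic orthogonal polynomial sequence. -/
def IsRegularFunc (u : PDual) : Prop :=
  ∃ P : ℕ → Polynomial ℂ, (∀ n, (P n).Monic ∧ (P n).natDegree = n) ∧
    (∀ m n, m ≠ n → u (P m * P n) = 0) ∧ (∀ n, u (P n ^ 2) ≠ 0)

/-- `P` is the monic OPS with respect to `u`. -/
def IsMonicOPS (u : PDual) (P : ℕ → Polynomial ℂ) : Prop :=
  (∀ n, (P n).Monic ∧ (P n).natDegree = n) ∧
    (∀ m n, m ≠ n → u (P m * P n) = 0) ∧ (∀ n, u (P n ^ 2) ≠ 0)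

/-- Continuous case: `d_n = d + a·n`. -/
def ddC (a d : ℂ) (n : ℕ) : ℂ := d + a * n

/-- Continuous case: `e_n = e + b·n`. -/
def eeC (b e : ℂ) (n : ℕ) : ℂ := e + b * n

/-- Continuous case: `β_n = n·e_{n-1}/d_{2n-2} - (n+1)·e_n/d_{2n}`. -/
def betaC (a b d e : ℂ) (n : ℕ) : ℂ :=
  n * eeC b e (n - 1) / ddC a d (2 * n - 2) - (n + 1) * eeC b e n / ddC a d (2 * n)

/-- Continuous case: `γ_{n+1} = -((n+1)·d_{n-1}/(d_{2n-1}·d_{2n+1}))·φ(-e_n/d_{2n})`. -/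
def gammaC (a b d e : ℂ) (φ : Polynomial ℂ) (n : ℕ) : ℂ :=
  -((n + 1) * ddC a d (n - 1) / (ddC a d (2 * n - 1) * ddC a d (2 * n + 1))) *
    φ.eval (-(eeC b e n) / ddC a d (2 * n))

/-- `d_n = d·q^n + a·[n]_q`. -/
def ddQ (q a d : ℂ) (n : ℕ) : ℂ := d * q ^ n + a * qBracket q n

/-- `e_n = e·q^n + (ω·d_n + b)·[n]_q`. -/
def eeQ (q ω a b d e : ℂ) (n : ℕ) : ℂ :=
  e * q ^ n + (ω * ddQ q a d n + b) * qBracket q n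

/-- `β_n = ω[n]_q + [n]_q·e_{n-1}/d_{2n-2} - [n+1]_q·e_n/d_{2n}`. -/
def betaQ (q ω a b d e : ℂ) (n : ℕ) : ℂ :=
  ω * qBracket q n + qBracket q n * eeQ q ω a b d e (n - 1) / ddQ q a d (2 * n - 2)
    - qBracket q (n + 1) * eeQ q ω a b d e n / ddQ q a d (2 * n)

/-- `γ_{n+1} = -(q^n·[n+1]_q·d_{n-1}/(d_{2n-1}·d_{2n+1}))·φ(-e_n/d_{2n})`. -/
def gammaQ (q ω a b d e : ℂ) (φ : Polynomial ℂ) (n : ℕ) : ℂ :=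
  -(q ^ n * qBracket q (n + 1) * ddQ q a d (n - 1) /
      (ddQ q a d (2 * n - 1) * ddQ q a d (2 * n + 1))) *
    φ.eval (-(eeQ q ω a b d e n) / ddQ q a d (2 * n))

/-- `Φ(x;n) = ∏_{j=1}^n φ(q^j x + ω[j]_q)`. -/
def PhiQ (q ω : ℂ) (φ : Polynomial ℂ) (n : ℕ) : Polynomial ℂ :=
  ∏ j ∈ Finset.range n, φ.comp (C (q ^ (j + 1)) * X + C (ω * qBracket q (j + 1)))

/-- `k_n = q^{n(n-3)/2}·∏_{j=0}^{n-1} d_{n+j-1}⁻¹`. -/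
def kQ (q a d : ℂ) (n : ℕ) : ℂ :=
  q ^ (((n : ℤ) * ((n : ℤ) - 3)) / 2) * ∏ j ∈ Finset.range n, (ddQ q a d (n + j - 1))⁻¹

set_option maxHeartbeats 1000000

section Aux
/- general helpers -/

lemma coeff_linear_pow (γ δ : ℂ) (j k : ℕ) :
    ((C γ * X + C δ) ^ j).coeff k = γ ^ k * δ ^ (j - k) * (j.choose k) := by
  have hterm : ∀ i : ℕ, ((C γ * X) ^ i * (C δ) ^ (j - i) * ((j.choose i : ℕ) : Polynomial ℂ))
      = C (γ ^ i * δ ^ (j - i) * (j.choose i)) * X ^ i := by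
    intro i
    rw [← C_eq_natCast, mul_pow, ← C_pow, ← C_pow, C_mul, C_mul]
    ring
  have hcoeff : ∀ i : ℕ, (((C γ * X) ^ i * (C δ) ^ (j - i) *
      ((j.choose i : ℕ) : Polynomial ℂ)).coeff k)
      = if k = i then γ ^ i * δ ^ (j - i) * (j.choose i) else 0 := by
    intro i
    rw [hterm, coeff_C_mul, coeff_X_pow]
    split <;> simp_all
  rw [add_pow, finset_sum_coeff]
  by_cases hk : k ≤ j
  · rw [Finset.sum_eq_single k]
    · rw [hcoeff]; simp
    · intro i hi hne
      rw [hcoeff]; simp [Ne.symm hne]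
    · intro h
      exact absurd (Finset.mem_range.2 (Nat.lt_succ_of_le hk)) h
  · push_neg at hk
    rw [Nat.choose_eq_zero_of_lt hk]
    rw [Finset.sum_eq_zero]
    · simp
    · intro i hi
      have hik : k ≠ i := by have := Finset.mem_range.1 hi; omega
      rw [hcoeff]; simp [hik]

lemma coeff_comp_linear (γ δ : ℂ) (f : Polynomial ℂ) (M k : ℕ) (hf : f.natDegree ≤ M) :
    (f.comp (C γ * X + C δ)).coeff k
      = ∑ j ∈ Finset.range (M + 1), f.coeff j * (γ ^ k * δ ^ (j - k) * (j.choose k)) := by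
  conv_lhs => rw [f.as_sum_range' (M + 1) (Nat.lt_succ_of_le hf)]
  rw [Polynomial.comp, eval₂_finset_sum, finset_sum_coeff]
  apply Finset.sum_congr rfl
  intro j hj
  rw [← C_mul_X_pow_eq_monomial]
  have : eval₂ C (C γ * X + C δ) (C (f.coeff j) * X ^ j)
      = C (f.coeff j) * (C γ * X + C δ) ^ j := by
    simp [eval₂_mul, eval₂_pow]
  rw [this, coeff_C_mul, coeff_linear_pow]

lemma comp_coeff_top (γ δ : ℂ) (f : Polynomial ℂ) (m : ℕ) (hf : f.natDegree ≤ m) :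
    (f.comp (C γ * X + C δ)).coeff m = γ ^ m * f.coeff m := by
  rw [coeff_comp_linear γ δ f m m hf]
  rw [Finset.sum_eq_single m]
  · simp [mul_comm]
  · intro i hi hne
    have hi' : i < m := by have := Finset.mem_range.1 hi; omega
    simp [Nat.choose_eq_zero_of_lt hi']
  · intro h; exact absurd (Finset.self_mem_range_succ m) h

lemma comp_coeff_sub (γ δ : ℂ) (f : Polynomial ℂ) (m : ℕ) (hf : f.natDegree ≤ m + 1) :
    (f.comp (C γ * X + C δ)).coeff m
      = γ ^ m * f.coeff m + (m + 1 : ℕ) * γ ^ m * δ * f.coeff (m + 1) := by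
  rw [coeff_comp_linear γ δ f (m + 1) m hf, Finset.sum_range_succ, Finset.sum_eq_single m]
  · rw [Nat.choose_succ_self_right]
    simp
    ring
  · intro i hi hne
    have hi' : i < m := by have := Finset.mem_range.1 hi; omega
    simp [Nat.choose_eq_zero_of_lt hi']
  · intro h; exact absurd (Finset.self_mem_range_succ m) h

lemma coeff_kill {p : Polynomial ℂ} {m : ℕ} (h1 : p.natDegree ≤ m + 1)
    (h2 : p.coeff (m + 1) = 0) : p.natDegree ≤ m := by
  by_cases hp : p = 0
  · simp [hp]
  · rcases Nat.lt_succ_iff_lt_or_eq.1 (Nat.lt_succ_of_le h1) with h | h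
    · omega
    · exfalso
      exact (Polynomial.leadingCoeff_ne_zero.2 hp) (by rw [leadingCoeff, h]; exact h2)

lemma lin_mul_coeff (α β : ℂ) (R : Polynomial ℂ) (m : ℕ) :
    ((C α * X + C β) * R).coeff (m + 1) = α * R.coeff m + β * R.coeff (m + 1) := by
  rw [add_mul, coeff_add, mul_assoc, coeff_C_mul, coeff_C_mul, coeff_X_mul]

lemma quad_mul_coeff (a b c : ℂ) (R : Polynomial ℂ) (m : ℕ) :
    ((C a * X ^ 2 + C b * X + C c) * R).coeff (m + 2)
      = a * R.coeff m + b * R.coeff (m + 1) + c * R.coeff (m + 2) := by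
  rw [add_mul, add_mul, coeff_add, coeff_add, mul_assoc, coeff_C_mul, mul_assoc,
    coeff_C_mul, coeff_C_mul]
  have h1 : (X ^ 2 * R).coeff (m + 2) = R.coeff m := coeff_X_pow_mul R 2 m
  have h2 : (X * R).coeff (m + 2) = R.coeff (m + 1) := coeff_X_mul R (m + 1)
  rw [h1, h2]



def lpoly (q ω : ℂ) : Polynomial ℂ := C q⁻¹ * X + C (-ω / q)
def spoly (q ω : ℂ) : Polynomial ℂ := C (q⁻¹ - 1) * X + C (-ω / q)

section Dlemmas
variable {q ω : ℂ} (hq0 : q ≠ 0) (hqω : q ≠ 1 ∨ ω ≠ 0)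
variable {Dstar : Polynomial ℂ →ₗ[ℂ] Polynomial ℂ}

include hq0 hqω

lemma spoly_ne : spoly q ω ≠ 0 := by
  intro h
  have h0 := congrArg (fun p => Polynomial.coeff p 0) h
  have h1 := congrArg (fun p => Polynomial.coeff p 1) h
  simp only [spoly, coeff_add, coeff_C_mul, coeff_X_one, coeff_X_zero, coeff_C,
    mul_one, mul_zero, coeff_zero] at h0 h1
  simp only [if_neg (one_ne_zero), if_pos rfl, zero_add, add_zero] at h0 h1
  have hq1 : q = 1 := by
    have := sub_eq_zero.1 h1
    rwa [inv_eq_one] at this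
  have hω : ω = 0 := by
    rcases _root_.div_eq_zero_iff.1 h0 with h' | h'
    · exact neg_eq_zero.1 h'
    · exact absurd h' hq0
  rcases hqω with h' | h' <;> [exact h' hq1; exact h' hω]

omit hq0 hqω

lemma hD (hDs : IsHahn q⁻¹ (-ω / q) Dstar) (f : Polynomial ℂ) :
    spoly q ω * Dstar f = f.comp (lpoly q ω) - f := hDs f

include hq0 hqω

lemma Dstar_cancel {A B : Polynomial ℂ} (h : spoly q ω * A = spoly q ω * B) : A = B :=
  mul_left_cancel₀ (spoly_ne hq0 hqω) h

lemma Dstar_one (hDs : IsHahn q⁻¹ (-ω / q) Dstar) : Dstar 1 = 0 := by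
  apply Dstar_cancel hq0 hqω
  rw [hD hDs]
  simp

lemma Ddeg (hDs : IsHahn q⁻¹ (-ω / q) Dstar) {f : Polynomial ℂ} {m : ℕ}
    (hf : f.natDegree ≤ m + 1) : (Dstar f).natDegree ≤ m := by
  by_cases hq1 : q = 1
  · subst hq1
    have hω : ω ≠ 0 := hqω.resolve_left (by simp)
    rw [natDegree_le_iff_coeff_eq_zero]
    intro N hN
    have heq := congrArg (fun p => Polynomial.coeff p N) (hD hDs f)
    simp only [spoly, inv_one, sub_self, map_zero, zero_mul, zero_add, coeff_sub] at heq
    rw [coeff_C_mul] at heq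
    have hcomp : (f.comp (lpoly 1 ω)).coeff N = f.coeff N := by
      have := comp_coeff_top (1 : ℂ)⁻¹ (-ω / 1) f N (le_trans hf hN)
      simpa [lpoly] using this
    rw [hcomp, sub_self] at heq
    have hωq : (-ω / 1 : ℂ) ≠ 0 := by simpa using hω
    exact (mul_eq_zero.1 heq).resolve_left hωq
  · by_cases hDf : Dstar f = 0
    · simp [hDf]
    have hsne : spoly q ω ≠ 0 := spoly_ne hq0 hqω
    have hα : q⁻¹ - 1 ≠ 0 := by
      rw [sub_ne_zero, Ne, inv_eq_one]; exact hq1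
    have hsd : (spoly q ω).natDegree = 1 := natDegree_linear hα
    have hmul : (spoly q ω * Dstar f).natDegree = 1 + (Dstar f).natDegree := by
      rw [natDegree_mul hsne hDf, hsd]
    have hrhs : (f.comp (lpoly q ω) - f).natDegree ≤ m + 1 := by
      apply le_trans (natDegree_sub_le _ _)
      apply max_le _ hf
      rw [lpoly, natDegree_comp]
      have h1 : (C q⁻¹ * X + C (-ω / q)).natDegree ≤ 1 := natDegree_linear_le
      calc f.natDegree * (C q⁻¹ * X + C (-ω / q)).natDegree ≤ f.natDegree * 1 :=
            Nat.mul_le_mul_left _ h1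
        _ ≤ m + 1 := by rwa [Nat.mul_one]
    rw [hD hDs] at hmul
    omega

lemma Dcoeff (hDs : IsHahn q⁻¹ (-ω / q) Dstar) {f : Polynomial ℂ} {m : ℕ}
    (hf : f.natDegree ≤ m + 1) :
    (Dstar f).coeff m = qBracket q⁻¹ (m + 1) * f.coeff (m + 1) := by
  by_cases hq1 : q = 1
  · subst hq1
    have hω : ω ≠ 0 := hqω.resolve_left (by simp)
    have heq := congrArg (fun p => Polynomial.coeff p m) (hD hDs f)
    simp only [spoly, inv_one, sub_self, map_zero, zero_mul, zero_add, coeff_sub] at heq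
    rw [coeff_C_mul] at heq
    have hcomp := comp_coeff_sub (1 : ℂ)⁻¹ (-ω / 1) f m hf
    rw [show lpoly 1 ω = C (1:ℂ)⁻¹ * X + C (-ω / 1) from rfl] at heq
    rw [hcomp] at heq
    simp only [inv_one, one_pow, one_mul] at heq
    have hb : qBracket (1 : ℂ)⁻¹ (m + 1) = ((m + 1 : ℕ) : ℂ) := by
      simp [qBracket]
    rw [hb]
    have hω1 : (-ω / 1 : ℂ) = -ω := by ring
    rw [hω1] at heq
    have heq2 : -ω * (Dstar f).coeff m = -ω * (((m + 1 : ℕ) : ℂ) * f.coeff (m + 1)) := by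
      rw [heq]; ring
    exact mul_left_cancel₀ (neg_ne_zero.2 hω) heq2
  · have hα : q⁻¹ - 1 ≠ 0 := by
      rw [sub_ne_zero, Ne, inv_eq_one]; exact hq1
    have heq := congrArg (fun p => Polynomial.coeff p (m + 1)) (hD hDs f)
    simp only [coeff_sub] at heq
    rw [show spoly q ω * Dstar f = (C (q⁻¹ - 1) * X + C (-ω / q)) * Dstar f from rfl,
      lin_mul_coeff] at heq
    have hdeg : (Dstar f).coeff (m + 1) = 0 := by
      apply coeff_eq_zero_of_natDegree_lt
      exact Nat.lt_succ_of_le (Ddeg hq0 hqω hDs hf)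
    rw [hdeg, mul_zero, add_zero] at heq
    have hcomp : (f.comp (C q⁻¹ * X + C (-ω / q))).coeff (m + 1)
        = (q⁻¹) ^ (m + 1) * f.coeff (m + 1) := comp_coeff_top _ _ f (m + 1) hf
    rw [show lpoly q ω = C q⁻¹ * X + C (-ω / q) from rfl] at heq
    rw [hcomp] at heq
    have hgeom : (q⁻¹ - 1) * qBracket q⁻¹ (m + 1) = (q⁻¹) ^ (m + 1) - 1 := by
      rw [qBracket, mul_comm]; exact geom_sum_mul q⁻¹ (m + 1)
    have heq2 : (q⁻¹ - 1) * (Dstar f).coeff m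
        = (q⁻¹ - 1) * (qBracket q⁻¹ (m + 1) * f.coeff (m + 1)) := by
      rw [heq, ← mul_assoc, hgeom]; ring
    exact mul_left_cancel₀ hα heq2

lemma prod_rule (hDs : IsHahn q⁻¹ (-ω / q) Dstar) (f g : Polynomial ℂ) :
    Dstar (f * g) = Dstar f * g + f.comp (lpoly q ω) * Dstar g := by
  apply Dstar_cancel hq0 hqω
  rw [hD hDs, mul_comp]
  calc f.comp (lpoly q ω) * g.comp (lpoly q ω) - f * g
      = (f.comp (lpoly q ω) - f) * g + f.comp (lpoly q ω) * (g.comp (lpoly q ω) - g) := by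
        ring
    _ = spoly q ω * Dstar f * g + f.comp (lpoly q ω) * (spoly q ω * Dstar g) := by
        rw [hD hDs, hD hDs]
    _ = spoly q ω * (Dstar f * g + f.comp (lpoly q ω) * Dstar g) := by ring

lemma Dstar_phi (hDs : IsHahn q⁻¹ (-ω / q) Dstar) (a b c : ℂ) :
    Dstar (C a * X ^ 2 + C b * X + C c)
      = C (a * (q⁻¹ + 1)) * X + C (b - a * ω * q⁻¹) := by
  apply Dstar_cancel hq0 hqω
  rw [hD hDs]
  have hdiv : (-ω / q : ℂ) = -(ω * q⁻¹) := by rw [div_eq_mul_inv, neg_mul]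
  simp only [spoly, lpoly, add_comp, mul_comp, C_comp, X_comp, pow_comp, hdiv,
    C_neg, C_mul, C_add, C_sub, C_1]
  ring

end Dlemmas


/- qBracket lemmas -/

lemma qBracket_zero (x : ℂ) : qBracket x 0 = 0 := by simp [qBracket]

lemma qBracket_succ (x : ℂ) (n : ℕ) : qBracket x (n + 1) = qBracket x n + x ^ n :=
  Finset.sum_range_succ _ _

lemma qBracket_succ' (x : ℂ) (n : ℕ) : qBracket x (n + 1) = x * qBracket x n + 1 :=
  geom_sum_succ

lemma qBracket_one (n : ℕ) : qBracket 1 n = (n : ℂ) := by simp [qBracket]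

lemma qBracket_add (x : ℂ) (m k : ℕ) :
    qBracket x (m + k) = qBracket x m + x ^ m * qBracket x k := by
  induction k with
  | zero => simp [qBracket_zero]
  | succ k ih =>
    rw [show m + (k + 1) = (m + k) + 1 from rfl, qBracket_succ, ih, qBracket_succ]
    ring

section qbr
variable {q : ℂ} (hq0 : q ≠ 0) (hqr : ∀ n : ℕ, 0 < n → q ^ n = 1 → q = 1)
include hq0 hqr

lemma qBracket_ne {m : ℕ} (hm : 1 ≤ m) : qBracket q m ≠ 0 := by
  by_cases hq1 : q = 1
  · subst hq1
    rw [qBracket_one]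
    exact Nat.cast_ne_zero.2 (by omega)
  · intro h
    have := geom_sum_mul q m
    rw [show (∑ i ∈ Finset.range m, q ^ i) = qBracket q m from rfl, h, zero_mul] at this
    have hqm : q ^ m = 1 := by
      have := this.symm
      rwa [sub_eq_zero] at this
    exact hq1 (hqr m hm hqm)

omit hqr

lemma qBracket_inv_rel (n : ℕ) : q ^ n * qBracket q⁻¹ n = q * qBracket q n := by
  induction n with
  | zero => simp [qBracket_zero]
  | succ n ih =>
    rw [qBracket_succ q⁻¹ n, qBracket_succ' q n]
    have h1 : q ^ (n + 1) * (qBracket q⁻¹ n + (q⁻¹) ^ n)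
        = q * (q ^ n * qBracket q⁻¹ n) + q := by
      rw [pow_succ]
      have : q ^ n * (q⁻¹) ^ n = 1 := by
        rw [← mul_pow, mul_inv_cancel₀ hq0, one_pow]
      field_simp
      linear_combination this
    rw [h1, ih]
    ring

include hqr

lemma qBracket_inv_ne {m : ℕ} (hm : 1 ≤ m) : qBracket q⁻¹ m ≠ 0 := by
  intro h
  have := qBracket_inv_rel hq0 (n := m)
  rw [h, mul_zero] at this
  exact mul_ne_zero hq0 (qBracket_ne hq0 hqr hm) this.symm

end qbr

/- OPS machinery -/


lemma pMul_apply (φ : Polynomial ℂ) (u : PDual) (f : Polynomial ℂ) :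
    pMul φ u f = u (φ * f) := rfl

lemma tri_bdd (w : PDual) (F : ℕ → Polynomial ℂ) (t : ℕ)
    (hdeg : ∀ k, k ≤ t → (F k).natDegree ≤ k)
    (hc : ∀ k, k ≤ t → (F k).coeff k ≠ 0)
    (hw : ∀ k, k ≤ t → w (F k) = 0) :
    ∀ p : Polynomial ℂ, p.natDegree ≤ t → w p = 0 := by
  induction t with
  | zero =>
    intro p hp
    have hF := eq_C_of_natDegree_le_zero (hdeg 0 le_rfl)
    have hpc := eq_C_of_natDegree_le_zero hp
    have : p = (p.coeff 0 / (F 0).coeff 0) • F 0 := by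
      rw [smul_eq_C_mul]
      conv_rhs => rw [hF]
      rw [coeff_C_zero, ← C_mul, div_mul_cancel₀ _ (hc 0 le_rfl)]
      exact hpc
    rw [this, map_smul, hw 0 le_rfl, smul_zero]
  | succ t ih =>
    intro p hp
    set r : ℂ := p.coeff (t + 1) / (F (t + 1)).coeff (t + 1) with hr
    have hF := hc (t + 1) le_rfl
    have hcancel : r * (F (t + 1)).coeff (t + 1) = p.coeff (t + 1) :=
      div_mul_cancel₀ _ hF
    set p' : Polynomial ℂ := p - C r * F (t + 1) with hp'
    have hdp' : p'.natDegree ≤ t := by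
      apply coeff_kill
      · apply le_trans (natDegree_sub_le _ _)
        exact max_le hp (le_trans (natDegree_C_mul_le _ _) (hdeg (t + 1) le_rfl))
      · rw [coeff_sub, coeff_C_mul, hcancel, sub_self]
    have hwp' : w p' = 0 := by
      apply ih (fun k hk => hdeg k (by omega)) (fun k hk => hc k (by omega))
        (fun k hk => hw k (by omega)) p' hdp'
    have : p = p' + r • F (t + 1) := by
      rw [hp', smul_eq_C_mul]; ring
    rw [this, map_add, hwp', map_smul, hw (t + 1) le_rfl, smul_zero, add_zero]

lemma tri (w : PDual) (F : ℕ → Polynomial ℂ)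
    (hdeg : ∀ k, (F k).natDegree ≤ k)
    (hc : ∀ k, (F k).coeff k ≠ 0)
    (hw : ∀ k, w (F k) = 0) :
    ∀ p : Polynomial ℂ, w p = 0 := fun p =>
  tri_bdd w F p.natDegree (fun k _ => hdeg k) (fun k _ => hc k) (fun k _ => hw k) p le_rfl

section OPS
variable {u : PDual} {P : ℕ → Polynomial ℂ}
variable (hP1 : ∀ n, (P n).Monic ∧ (P n).natDegree = n)
variable (hP2 : ∀ m n, m ≠ n → u (P m * P n) = 0)
variable (hP3 : ∀ n, u (P n ^ 2) ≠ 0)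

include hP1

lemma P_coeff_self (n : ℕ) : (P n).coeff n = 1 := by
  have h := (hP1 n).1.coeff_natDegree
  rwa [(hP1 n).2] at h

include hP2

lemma F4a {n : ℕ} {p : Polynomial ℂ} (hp : p.natDegree < n) : u (p * P n) = 0 := by
  rcases n with _ | m
  · omega
  · have : pMul (P (m + 1)) u p = 0 := by
      apply tri_bdd (pMul (P (m + 1)) u) P m
      · exact fun k _ => (hP1 k).2.le
      · exact fun k _ => by rw [P_coeff_self hP1]; exact one_ne_zero
      · exact fun k hk => hP2 (m + 1) k (by omega)
      · omega
    rw [pMul_apply] at this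
    rwa [mul_comm]

lemma F4b {n : ℕ} {p : Polynomial ℂ} (hp : p.natDegree ≤ n) :
    u (p * P n) = p.coeff n * u (P n * P n) := by
  set p' : Polynomial ℂ := p - C (p.coeff n) * P n with hp'
  have h0 : u (p' * P n) = 0 := by
    rcases n with _ | m
    · have hpc := eq_C_of_natDegree_le_zero hp
      have hP0 : P 0 = 1 := by
        have := (hP1 0).1
        exact this.natDegree_eq_zero.1 (hP1 0).2
      rw [hp', hP0, hpc]
      simp
    · apply F4a hP1 hP2
      have : p'.natDegree ≤ m := by
        apply coeff_kill
        · apply le_trans (natDegree_sub_le _ _)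
          exact max_le hp (le_trans (natDegree_C_mul_le _ _) (hP1 (m + 1)).2.le)
        · rw [coeff_sub, coeff_C_mul, P_coeff_self hP1, mul_one, sub_self]
      omega
  have hsplit : p * P n = p' * P n + (p.coeff n) • (P n * P n) := by
    rw [hp', smul_eq_C_mul]; ring
  rw [hsplit, map_add, h0, zero_add, map_smul, smul_eq_mul]

include hP3

lemma ann {p : Polynomial ℂ} (h : ∀ f, u (p * f) = 0) : p = 0 := by
  by_contra hp
  have h1 := h (P p.natDegree)
  rw [F4b hP1 hP2 le_rfl] at h1
  have h2 : u (P p.natDegree * P p.natDegree) ≠ 0 := by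
    have := hP3 p.natDegree
    rwa [sq] at this
  have h3 : p.coeff p.natDegree ≠ 0 := leadingCoeff_ne_zero.2 hp
  exact (mul_ne_zero h3 h2) h1

end OPS



def tauQ (q a d : ℂ) (n : ℕ) : ℂ := q * d + a * qBracket q⁻¹ n

def Wpoly (q : ℂ) (φ ψ : Polynomial ℂ) (Dstar : Polynomial ℂ →ₗ[ℂ] Polynomial ℂ)
    (k : ℕ) : Polynomial ℂ := C q * (ψ * X ^ k) + φ * Dstar (X ^ k)

lemma tau_rel {q : ℂ} (hq0 : q ≠ 0) (a d : ℂ) (n : ℕ) :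
    q ^ n * tauQ q a d n = q * ddQ q a d n := by
  have h := qBracket_inv_rel hq0 (n := n)
  rw [tauQ, ddQ]
  linear_combination a * h

lemma tauQ_ne {q : ℂ} (hq0 : q ≠ 0) {a d : ℂ} {n : ℕ} (h : ddQ q a d n ≠ 0) :
    tauQ q a d n ≠ 0 := by
  intro h0
  have := tau_rel hq0 a d n
  rw [h0, mul_zero] at this
  exact mul_ne_zero hq0 h this.symm

lemma tauQ_zero {q : ℂ} (hq0 : q ≠ 0) {a d : ℂ} {n : ℕ} (h : ddQ q a d n = 0) :
    tauQ q a d n = 0 := by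
  have := tau_rel hq0 a d n
  rw [h, mul_zero] at this
  rcases mul_eq_zero.1 this with h' | h'
  · exact absurd h' (pow_ne_zero n hq0)
  · exact h'

lemma lpow_coeff {q ω : ℂ} (k : ℕ) : (lpoly q ω ^ k).coeff k = (q⁻¹) ^ k := by
  rw [← X_pow_comp (p := lpoly q ω) (k := k),
    show lpoly q ω = C q⁻¹ * X + C (-ω / q) from rfl,
    comp_coeff_top _ _ _ k (natDegree_X_pow_le k), coeff_X_pow, if_pos rfl, mul_one]

lemma lpow_deg {q ω : ℂ} (k : ℕ) : (lpoly q ω ^ k).natDegree ≤ k := by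
  apply le_trans natDegree_pow_le
  have : (lpoly q ω).natDegree ≤ 1 := natDegree_linear_le
  calc k * (lpoly q ω).natDegree ≤ k * 1 := Nat.mul_le_mul_left _ this
    _ = k := Nat.mul_one k

section Pearson
variable {q ω : ℂ} (hq0 : q ≠ 0) (hqω : q ≠ 1 ∨ ω ≠ 0)
variable {Dstar : Polynomial ℂ →ₗ[ℂ] Polynomial ℂ} (hDs : IsHahn q⁻¹ (-ω / q) Dstar)
variable {a b c d e : ℂ} {φ ψ : Polynomial ℂ}
variable (hφ : φ = C a * X ^ 2 + C b * X + C c) (hψ : ψ = C d * X + C e)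
variable {u : PDual} {P : ℕ → Polynomial ℂ}
variable (hP1 : ∀ n, (P n).Monic ∧ (P n).natDegree = n)
variable (hP2 : ∀ m n, m ≠ n → u (P m * P n) = 0)
variable (hP3 : ∀ n, u (P n ^ 2) ≠ 0)
variable (hP : ∀ f, u (φ * Dstar f) = -q * u (ψ * f))

include hq0 hqω hDs hφ hψ

lemma Wdeg (k : ℕ) : (Wpoly q φ ψ Dstar k).natDegree ≤ k + 1 := by
  apply le_trans (natDegree_add_le _ _)
  apply max_le
  · apply le_trans (natDegree_C_mul_le _ _)
    apply le_trans (natDegree_mul_le)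
    have h1 : ψ.natDegree ≤ 1 := by rw [hψ]; exact natDegree_linear_le
    have h2 : (X ^ k : Polynomial ℂ).natDegree ≤ k := natDegree_X_pow_le k
    omega
  · rcases k with _ | m
    · rw [pow_zero, Dstar_one hq0 hqω hDs, mul_zero]
      simp
    · apply le_trans (natDegree_mul_le)
      have h1 : φ.natDegree ≤ 2 := by rw [hφ]; exact natDegree_quadratic_le
      have h2 : (Dstar (X ^ (m + 1))).natDegree ≤ m :=
        Ddeg hq0 hqω hDs (by rw [natDegree_X_pow])
      omega

lemma Wcoeff (k : ℕ) : (Wpoly q φ ψ Dstar k).coeff (k + 1) = tauQ q a d k := by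
  rw [Wpoly, coeff_add, coeff_C_mul]
  have h1 : (ψ * X ^ k).coeff (k + 1) = d := by
    rw [show k + 1 = 1 + k by omega, coeff_mul_X_pow, hψ]
    simp
  rw [h1]
  rcases k with _ | m
  · rw [pow_zero, Dstar_one hq0 hqω hDs, mul_zero, coeff_zero, tauQ, qBracket_zero]
    ring
  · have hdeg : (Dstar (X ^ (m + 1))).natDegree ≤ m :=
      Ddeg hq0 hqω hDs (by rw [natDegree_X_pow])
    have hc0 : (Dstar (X ^ (m + 1))).coeff m = qBracket q⁻¹ (m + 1) := by
      rw [Dcoeff hq0 hqω hDs (by rw [natDegree_X_pow]), coeff_X_pow, if_pos rfl, mul_one]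
    rw [hφ, show m + 1 + 1 = m + 2 from rfl, quad_mul_coeff, hc0]
    rw [coeff_eq_zero_of_natDegree_lt (by omega), coeff_eq_zero_of_natDegree_lt (by omega)]
    rw [tauQ]
    ring

include hP

lemma relk (k : ℕ) (f : Polynomial ℂ) :
    u (φ * (lpoly q ω ^ k * Dstar f)) = - u (Wpoly q φ ψ Dstar k * f) := by
  have h := hP (X ^ k * f)
  rw [prod_rule hq0 hqω hDs (X ^ k) f, X_pow_comp] at h
  have hsplit : φ * (Dstar (X ^ k) * f + lpoly q ω ^ k * Dstar f)
      = φ * (Dstar (X ^ k) * f) + φ * (lpoly q ω ^ k * Dstar f) := by ring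
  rw [hsplit, map_add] at h
  have hW : Wpoly q φ ψ Dstar k * f
      = C q * (ψ * (X ^ k * f)) + φ * (Dstar (X ^ k) * f) := by rw [Wpoly]; ring
  rw [hW, map_add, ← smul_eq_C_mul, map_smul, smul_eq_mul]
  linear_combination h

include hP1 hP2

lemma KO {n : ℕ} {p : Polynomial ℂ} (hp : p.natDegree ≤ n) :
    u (φ * (p * Dstar (P (n + 2)))) = 0 := by
  have key := tri_bdd (pMul (φ * Dstar (P (n + 2))) u) (fun k => lpoly q ω ^ k) n
    (fun k _ => lpow_deg k) (fun k _ => by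
      rw [lpow_coeff]; exact pow_ne_zero _ (inv_ne_zero hq0))
    (fun k hk => by
      rw [pMul_apply]
      have hre : (φ * Dstar (P (n + 2))) * lpoly q ω ^ k
          = φ * (lpoly q ω ^ k * Dstar (P (n + 2))) := by ring
      rw [hre, relk hq0 hqω hDs hφ hψ hP]
      rw [F4a hP1 hP2 (n := n + 2) (p := Wpoly q φ ψ Dstar k)
        (by have := Wdeg hq0 hqω hDs hφ hψ (k := k); omega)]
      simp) p hp
  rw [pMul_apply] at key
  have hre : (φ * Dstar (P (n + 2))) * p = φ * (p * Dstar (P (n + 2))) := by ring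
  rwa [hre] at key

lemma KO' {n : ℕ} {p : Polynomial ℂ} (hp : p.natDegree ≤ n) (hc : p.coeff n = 0) :
    u (φ * (p * Dstar (P (n + 1)))) = 0 := by
  rcases n with _ | m
  · have : p = 0 := by
      have := eq_C_of_natDegree_le_zero hp
      rw [hc] at this
      simpa using this
    rw [this]
    simp
  · exact KO hq0 hqω hDs hφ hψ hP1 hP2 hP (coeff_kill hp hc)

omit hP1 hP2 hP hφ hψ

include hP1

lemma DPdeg (m : ℕ) : (Dstar (P (m + 1))).natDegree ≤ m :=
  Ddeg hq0 hqω hDs (by rw [(hP1 (m + 1)).2])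

lemma DPcoeff (m : ℕ) : (Dstar (P (m + 1))).coeff m = qBracket q⁻¹ (m + 1) := by
  rw [Dcoeff hq0 hqω hDs (by rw [(hP1 (m + 1)).2]), P_coeff_self hP1, mul_one]

include hφ hψ hP2 hP3 hP

lemma phi_ne (hne : φ ≠ 0 ∨ ψ ≠ 0) : φ ≠ 0 := by
  intro h0
  have hψu : ∀ f, u (ψ * f) = 0 := by
    intro f
    have h := hP f
    rw [h0, zero_mul, map_zero] at h
    have := h.symm
    rcases mul_eq_zero.1 this with h' | h'
    · exact absurd h' (neg_ne_zero.2 hq0)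
    · exact h'
  have := ann hP1 hP2 hP3 hψu
  rcases hne with h' | h' <;> [exact h' h0; exact h' this]

lemma stepA (hne : φ ≠ 0 ∨ ψ ≠ 0)
    (hqr : ∀ n : ℕ, 0 < n → q ^ n = 1 → q = 1) :
    ∀ N : ℕ, ddQ q a d N ≠ 0 := by
  intro N hdN
  set R : Polynomial ℂ := Dstar (P (N + 1)) with hR
  have hRdeg : R.natDegree ≤ N := DPdeg hq0 hqω hDs hP1 N
  have hRcoeff : R.coeff N = qBracket q⁻¹ (N + 1) := DPcoeff hq0 hqω hDs hP1 N
  have hκ : qBracket q⁻¹ (N + 1) ≠ 0 := qBracket_inv_ne hq0 hqr (by omega)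
  have hRne : R ≠ 0 := by
    intro h
    rw [h, coeff_zero] at hRcoeff
    exact hκ hRcoeff.symm
  -- step (a) : the relations for k ≤ N
  have ha : ∀ k, k ≤ N → u (φ * (lpoly q ω ^ k * R)) = 0 := by
    intro k hk
    rw [relk hq0 hqω hDs hφ hψ hP k (P (N + 1))]
    rcases Nat.lt_or_ge k N with hlt | hge
    · rw [F4a hP1 hP2 (n := N + 1) (p := Wpoly q φ ψ Dstar k)
        (by have := Wdeg hq0 hqω hDs hφ hψ (k := k); omega)]
      simp
    · have hkN : k = N := by omega
      rw [F4b hP1 hP2 (n := N + 1) (p := Wpoly q φ ψ Dstar k)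
        (by have := Wdeg hq0 hqω hDs hφ hψ (k := k); omega)]
      rw [hkN, Wcoeff hq0 hqω hDs hφ hψ, tauQ_zero hq0 hdN]
      simp
  -- mixed family
  have key := tri (pMul (φ * R) u)
    (fun k => if k ≤ N then lpoly q ω ^ k else Dstar (P (k + 1)))
    (fun k => by
      by_cases h : k ≤ N
      · simpa [h] using lpow_deg (q := q) (ω := ω) k
      · simpa [h] using DPdeg hq0 hqω hDs hP1 k)
    (fun k => by
      by_cases h : k ≤ N
      · simp only [h, if_pos]
        rw [lpow_coeff]
        exact pow_ne_zero _ (inv_ne_zero hq0)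
      · simp only [h, if_neg, if_false]
        rw [DPcoeff hq0 hqω hDs hP1 k]
        exact qBracket_inv_ne hq0 hqr (by omega))
    (fun k => by
      rw [pMul_apply]
      by_cases h : k ≤ N
      · simp only [h, if_pos]
        have hre : (φ * R) * lpoly q ω ^ k = φ * (lpoly q ω ^ k * R) := by ring
        rw [hre]
        exact ha k h
      · simp only [h, if_neg, if_false]
        push_neg at h
        obtain ⟨m, rfl⟩ : ∃ m, k = m + 1 := ⟨k - 1, by omega⟩
        have hre : (φ * R) * Dstar (P (m + 1 + 1)) = φ * (R * Dstar (P (m + 2))) := by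
          norm_num
          ring
        rw [hre]
        exact KO hq0 hqω hDs hφ hψ hP1 hP2 hP (by omega))
  -- conclude φ * R = 0
  have hann : φ * R = 0 := by
    apply ann hP1 hP2 hP3
    intro f
    have := key f
    rwa [pMul_apply] at this
  rcases mul_eq_zero.1 hann with h0 | h0
  · exact phi_ne hq0 hqω hDs hφ hψ hP1 hP2 hP3 hP hne h0
  · exact hRne h0

end Pearson


lemma lin_shape {p : Polynomial ℂ} (h : p.natDegree ≤ 1) :
    p = C (p.coeff 1) * X + C (p.coeff 0) := by
  ext k
  rcases k with _ | _ | k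
  · simp
  · simp
  · rw [coeff_eq_zero_of_natDegree_lt (by omega)]
    simp [coeff_C]

theorem lemmaB {q ω : ℂ} (hq0 : q ≠ 0) (hqω : q ≠ 1 ∨ ω ≠ 0)
    (hqr : ∀ n : ℕ, 0 < n → q ^ n = 1 → q = 1)
    {Dstar : Polynomial ℂ →ₗ[ℂ] Polynomial ℂ} (hDs : IsHahn q⁻¹ (-ω / q) Dstar) :
    ∀ n : ℕ, ∀ (a b c d e : ℂ) (φ ψ : Polynomial ℂ),
      φ = C a * X ^ 2 + C b * X + C c → ψ = C d * X + C e → (φ ≠ 0 ∨ ψ ≠ 0) →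
      ∀ (u : PDual) (P : ℕ → Polynomial ℂ),
      (∀ k, (P k).Monic ∧ (P k).natDegree = k) →
      (∀ m k, m ≠ k → u (P m * P k) = 0) →
      (∀ k, u (P k ^ 2) ≠ 0) →
      (∀ f, u (φ * Dstar f) = -q * u (ψ * f)) →
      (∀ k, ddQ q a d k ≠ 0) →
      φ.eval (-(eeQ q ω a b d e n) / ddQ q a d (2 * n)) ≠ 0 := by
  intro n
  induction n with
  | zero =>
    intro a b c d e φ ψ hφ hψ hne u P hP1 hP2 hP3 hP hdd
    have hd0 : ddQ q a d 0 = d := by simp [ddQ, qBracket_zero]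
    have he0 : eeQ q ω a b d e 0 = e := by simp [eeQ, qBracket_zero]
    rw [show 2 * 0 = 0 from rfl, hd0, he0]
    set x₀ : ℂ := -e / d with hx₀
    intro hroot
    have hd : d ≠ 0 := by have := hdd 0; rwa [hd0] at this
    have hφne : φ ≠ 0 := phi_ne hq0 hqω hDs hφ hψ hP1 hP2 hP3 hP hne
    obtain ⟨φt, hfact⟩ : X - C x₀ ∣ φ := dvd_iff_isRoot.2 hroot
    have hψfact : ψ = C d * (X - C x₀) := by
      rw [hψ, mul_sub, ← C_mul]
      have : d * x₀ = -e := by rw [hx₀]; field_simp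
      rw [this, C_neg, sub_neg_eq_add]
    have hφtne : φt ≠ 0 := fun h => hφne (by rw [hfact, h, mul_zero])
    have hφtdeg : φt.natDegree ≤ 1 := by
      have h2 : φ.natDegree ≤ 2 := hφ ▸ natDegree_quadratic_le
      have h3 := natDegree_mul (X_sub_C_ne_zero x₀) hφtne
      rw [← hfact, natDegree_X_sub_C] at h3
      omega
    have hcoeff1 : φt.coeff 1 = a := by
      have hc2 : φ.coeff 2 = a := by
        rw [hφ]
        simp [coeff_C]
      rw [hfact, sub_mul, coeff_sub, coeff_C_mul] at hc2
      have hxm : (X * φt).coeff 2 = φt.coeff 1 := coeff_X_mul φt 1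
      have hz2 : φt.coeff 2 = 0 := coeff_eq_zero_of_natDegree_lt (by omega)
      rw [hxm, hz2, mul_zero, sub_zero] at hc2
      exact hc2
    set F : ℕ → Polynomial ℂ := fun t => C (q * d) * X ^ t + φt * Dstar (X ^ t) with hF
    have hFt : ∀ t, F t = C (q * d) * X ^ t + φt * Dstar (X ^ t) := fun t => rfl
    have hFdeg : ∀ t, (F t).natDegree ≤ t := by
      intro t
      rw [hFt]
      apply le_trans (natDegree_add_le _ _)
      apply max_le
      · exact le_trans (natDegree_C_mul_le _ _) (natDegree_X_pow_le t)
      · rcases t with _ | m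
        · rw [pow_zero, Dstar_one hq0 hqω hDs, mul_zero]
          simp
        · apply le_trans natDegree_mul_le
          have h2 : (Dstar (X ^ (m + 1))).natDegree ≤ m :=
            Ddeg hq0 hqω hDs (by rw [natDegree_X_pow])
          omega
    have hFcoeff : ∀ t, (F t).coeff t = tauQ q a d t := by
      intro t
      rw [hFt, coeff_add, coeff_C_mul, coeff_X_pow, if_pos rfl, mul_one]
      rcases t with _ | m
      · rw [pow_zero, Dstar_one hq0 hqω hDs, mul_zero, coeff_zero, tauQ, qBracket_zero]
        ring
      · have hdeg2 : (Dstar (X ^ (m + 1))).natDegree ≤ m :=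
          Ddeg hq0 hqω hDs (by rw [natDegree_X_pow])
        have hc0 : (Dstar (X ^ (m + 1))).coeff m = qBracket q⁻¹ (m + 1) := by
          rw [Dcoeff hq0 hqω hDs (by rw [natDegree_X_pow]), coeff_X_pow, if_pos rfl,
            mul_one]
        have hz1 : (Dstar (X ^ (m + 1))).coeff (m + 1) = 0 :=
          coeff_eq_zero_of_natDegree_lt (by omega)
        conv_lhs => rw [lin_shape hφtdeg]
        rw [lin_mul_coeff, hc0, hcoeff1, hz1, mul_zero, add_zero, tauQ]
    have hw : ∀ t, pMul (X - C x₀) u (F t) = 0 := by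
      intro t
      rw [pMul_apply, hFt]
      have hkey : (X - C x₀) * (C (q * d) * X ^ t + φt * Dstar (X ^ t))
          = C q * (ψ * X ^ t) + φ * Dstar (X ^ t) := by
        rw [hψfact, hfact, C_mul]
        ring
      rw [hkey, map_add, ← smul_eq_C_mul, map_smul, smul_eq_mul, hP (X ^ t)]
      ring
    have hzero : X - C x₀ = 0 := by
      apply ann hP1 hP2 hP3
      intro f
      have := tri (pMul (X - C x₀) u) F hFdeg
        (fun t => by rw [hFcoeff]; exact tauQ_ne hq0 (hdd t)) hw f
      rwa [pMul_apply] at this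
    exact X_sub_C_ne_zero x₀ hzero
  | succ n ih =>
    intro a b c d e φ ψ hφ hψ hne u P hP1 hP2 hP3 hP hdd
    have hκne : ∀ m : ℕ, qBracket q⁻¹ (m + 1) ≠ 0 :=
      fun m => qBracket_inv_ne hq0 hqr (by omega)
    have hφne : φ ≠ 0 := phi_ne hq0 hqω hDs hφ hψ hP1 hP2 hP3 hP hne
    set a' : ℂ := a * q⁻¹ ^ 2 with ha'
    set b' : ℂ := b * q⁻¹ - 2 * a * ω * q⁻¹ ^ 2 with hb'
    set c' : ℂ := a * ω ^ 2 * q⁻¹ ^ 2 - b * ω * q⁻¹ + c with hc'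
    set d' : ℂ := d + a * (q⁻¹ ^ 2 + q⁻¹) with hd'
    set e' : ℂ := e + b * q⁻¹ - a * ω * q⁻¹ ^ 2 with he'
    set Φ : Polynomial ℂ := C a' * X ^ 2 + C b' * X + C c' with hΦ
    set Ψ : Polynomial ℂ := C d' * X + C e' with hΨ
    have hdiv : (-ω / q : ℂ) = -(ω * q⁻¹) := by rw [div_eq_mul_inv, neg_mul]
    have hΦcomp : Φ = φ.comp (lpoly q ω) := by
      rw [hΦ, hφ, ha', hb', hc']
      simp only [lpoly, add_comp, mul_comp, C_comp, X_comp, pow_comp, hdiv,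
        C_neg, C_mul, C_add, C_sub, C_pow, map_ofNat]
      ring
    have hΨid : Ψ = ψ + C q⁻¹ * (C (a * (q⁻¹ + 1)) * X + C (b - a * ω * q⁻¹)) := by
      rw [hΨ, hψ, hd', he']
      simp only [C_neg, C_mul, C_add, C_sub, C_pow, C_1]
      ring
    set v : PDual := pMul φ u with hvdef
    have hv : ∀ f, v f = u (φ * f) := fun f => rfl
    have hDφ : Dstar φ = C (a * (q⁻¹ + 1)) * X + C (b - a * ω * q⁻¹) := by
      rw [hφ]; exact Dstar_phi hq0 hqω hDs a b c
    have hqq : q * q⁻¹ = 1 := mul_inv_cancel₀ hq0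
    have hPd : ∀ f, v (Φ * Dstar f) = -q * v (Ψ * f) := by
      intro f
      have h := hP (φ * f)
      rw [prod_rule hq0 hqω hDs φ f] at h
      rw [← hΦcomp] at h
      have hsplit : φ * (Dstar φ * f + Φ * Dstar f)
          = φ * (Dstar φ * f) + φ * (Φ * Dstar f) := by ring
      rw [hsplit, map_add] at h
      rw [hv, hv]
      have hexp : φ * (Ψ * f) = ψ * (φ * f) + C q⁻¹ * (φ * (Dstar φ * f)) := by
        rw [hΨid, hDφ]; ring
      rw [hexp, map_add, ← smul_eq_C_mul, map_smul, smul_eq_mul]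
      linear_combination h + u (φ * (Dstar φ * f)) * hqq
    set κ : ℕ → ℂ := fun m => qBracket q⁻¹ (m + 1) with hκdef
    have hκm : ∀ m, κ m = qBracket q⁻¹ (m + 1) := fun _ => rfl
    set Q : ℕ → Polynomial ℂ := fun m => C (κ m)⁻¹ * Dstar (P (m + 1)) with hQdef
    have hQm : ∀ m, Q m = C (κ m)⁻¹ * Dstar (P (m + 1)) := fun _ => rfl
    have hDPdeg : ∀ m, (Dstar (P (m + 1))).natDegree ≤ m :=
      fun m => DPdeg hq0 hqω hDs hP1 m
    have hDPcoeff : ∀ m, (Dstar (P (m + 1))).coeff m = κ m :=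
      fun m => DPcoeff hq0 hqω hDs hP1 m
    have hκnem : ∀ m, κ m ≠ 0 := fun m => hκne m
    have hQdeg : ∀ m, (Q m).natDegree = m := by
      intro m
      apply le_antisymm
      · exact le_trans (natDegree_C_mul_le _ _) (hDPdeg m)
      · apply le_natDegree_of_ne_zero (n := m)
        rw [hQm, coeff_C_mul, hDPcoeff, inv_mul_cancel₀ (hκnem m)]
        exact one_ne_zero
    have hQ1 : ∀ m, (Q m).Monic ∧ (Q m).natDegree = m := by
      intro m
      refine ⟨?_, hQdeg m⟩
      show (Q m).leadingCoeff = 1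
      rw [leadingCoeff, hQdeg m, hQm, coeff_C_mul, hDPcoeff, inv_mul_cancel₀ (hκnem m)]
    have horthlt : ∀ m k, m < k → v (Q m * Q k) = 0 := by
      intro m k hmk
      rw [hv]
      obtain ⟨j, rfl⟩ : ∃ j, k = j + 1 := ⟨k - 1, by omega⟩
      have hsplit : φ * (Q m * Q (j + 1))
          = ((κ m)⁻¹ * (κ (j + 1))⁻¹) •
            (φ * (Dstar (P (m + 1)) * Dstar (P (j + 2)))) := by
        rw [hQm, hQm, smul_eq_C_mul, C_mul]
        ring
      rw [hsplit, map_smul, smul_eq_mul]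
      rw [KO hq0 hqω hDs hφ hψ hP1 hP2 hP (n := j) (p := Dstar (P (m + 1)))
        (le_trans (hDPdeg m) (by omega))]
      ring
    have hQ2 : ∀ m k, m ≠ k → v (Q m * Q k) = 0 := by
      intro m k hmk
      rcases Nat.lt_or_ge m k with h | h
      · exact horthlt m k h
      · have hkm : k < m := by omega
        rw [mul_comm]
        exact horthlt k m hkm
    have hQ3 : ∀ m, v (Q m ^ 2) ≠ 0 := by
      intro m
      rw [sq, hv]
      set DP : Polynomial ℂ := Dstar (P (m + 1)) with hDP
      have hρ : u (φ * ((DP - C (κ m) * X ^ m) * DP)) = 0 := by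
        apply KO' hq0 hqω hDs hφ hψ hP1 hP2 hP (n := m)
        · apply le_trans (natDegree_sub_le _ _)
          exact max_le (hDPdeg m)
            (le_trans (natDegree_C_mul_le _ _) (natDegree_X_pow_le m))
        · rw [coeff_sub, hDPcoeff, coeff_C_mul, coeff_X_pow, if_pos rfl, mul_one,
            sub_self]
      have hr : u (φ * ((X ^ m - C (q ^ m) * lpoly q ω ^ m) * DP)) = 0 := by
        apply KO' hq0 hqω hDs hφ hψ hP1 hP2 hP (n := m)
        · apply le_trans (natDegree_sub_le _ _)
          exact max_le (natDegree_X_pow_le m)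
            (le_trans (natDegree_C_mul_le _ _) (lpow_deg m))
        · rw [coeff_sub, coeff_X_pow, if_pos rfl, coeff_C_mul, lpow_coeff,
            ← mul_pow, hqq, one_pow, sub_self]
      have hWrel := relk hq0 hqω hDs hφ hψ hP m (P (m + 1))
      have hWval : u (Wpoly q φ ψ Dstar m * P (m + 1))
          = tauQ q a d m * u (P (m + 1) * P (m + 1)) := by
        rw [F4b hP1 hP2 (Wdeg hq0 hqω hDs hφ hψ m), Wcoeff hq0 hqω hDs hφ hψ m]
      have hsplit1 : φ * (Q m * Q m) = ((κ m)⁻¹ * (κ m)⁻¹) • (φ * (DP * DP)) := by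
        rw [hQm, smul_eq_C_mul, C_mul]
        ring
      have hsplit2 : φ * (DP * DP)
          = φ * ((DP - C (κ m) * X ^ m) * DP) + (κ m) • (φ * (X ^ m * DP)) := by
        rw [smul_eq_C_mul]; ring
      have hsplit3 : φ * (X ^ m * DP)
          = φ * ((X ^ m - C (q ^ m) * lpoly q ω ^ m) * DP)
            + (q ^ m) • (φ * (lpoly q ω ^ m * DP)) := by
        rw [smul_eq_C_mul]; ring
      have hval : u (φ * (Q m * Q m))
          = (κ m)⁻¹ * (q ^ m * (-(tauQ q a d m * u (P (m + 1) * P (m + 1))))) := by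
        rw [hsplit1, map_smul, hsplit2, map_add, hρ, map_smul, hsplit3, map_add, hr,
          map_smul, hWrel, hWval]
        simp only [smul_eq_mul, zero_add]
        have hκc : (κ m)⁻¹ * κ m = 1 := inv_mul_cancel₀ (hκnem m)
        linear_combination
          ((κ m)⁻¹ * (q ^ m * (-(tauQ q a d m * u (P (m + 1) * P (m + 1)))))) * hκc
      rw [hval]
      have hτ : tauQ q a d m ≠ 0 := tauQ_ne hq0 (hdd m)
      have hs : u (P (m + 1) * P (m + 1)) ≠ 0 := by
        have := hP3 (m + 1); rwa [sq] at this
      exact mul_ne_zero (inv_ne_zero (hκnem m))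
        (mul_ne_zero (pow_ne_zero _ hq0) (neg_ne_zero.2 (mul_ne_zero hτ hs)))
    have hne' : Φ ≠ 0 ∨ Ψ ≠ 0 := by
      left
      rw [hΦcomp]
      intro h0
      have hl : (lpoly q ω).natDegree = 1 := by
        rw [show lpoly q ω = C q⁻¹ * X + C (-ω / q) from rfl]
        exact natDegree_linear (inv_ne_zero hq0)
      have hlead := leadingCoeff_comp (p := φ) (q := lpoly q ω) (by rw [hl]; omega)
      rw [h0, leadingCoeff_zero] at hlead
      have hlc : (lpoly q ω).leadingCoeff = q⁻¹ := by
        rw [show lpoly q ω = C q⁻¹ * X + C (-ω / q) from rfl]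
        exact leadingCoeff_linear (inv_ne_zero hq0)
      rw [hlc] at hlead
      exact (mul_ne_zero (leadingCoeff_ne_zero.2 hφne)
        (pow_ne_zero _ (inv_ne_zero hq0))) hlead.symm
    have hI1 : ∀ k, q ^ 2 * ddQ q a' d' k = ddQ q a d (k + 2) := by
      intro k
      have h2 : qBracket q (k + 2) = qBracket q k + q ^ k + q ^ (k + 1) := by
        rw [qBracket_succ, qBracket_succ]
      rw [ddQ, ddQ, h2, ha', hd']
      field_simp
      ring
    have hdd' : ∀ k, ddQ q a' d' k ≠ 0 := by
      intro k h0
      have := hI1 k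
      rw [h0, mul_zero] at this
      exact hdd (k + 2) this.symm
    have hIH := ih a' b' c' d' e' Φ Ψ hΦ hΨ hne' v Q hQ1 hQ2 hQ3 hPd hdd'
    have hq2a' : q ^ 2 * a' = a := by
      rw [ha']; field_simp
    have hq2d' : q ^ 2 * d' = d * q ^ 2 + a * (1 + q) := by
      rw [hd']; field_simp
    have hq2e' : q ^ 2 * e' = e * q ^ 2 + b * q - a * ω := by
      rw [he']; field_simp
    have hq2b' : q ^ 2 * b' = b * q - 2 * a * ω := by
      rw [hb']; field_simp
    have hI2 : q ^ 2 * eeQ q ω a' b' d' e' n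
        = q * eeQ q ω a b d e (n + 1) - ω * ddQ q a d (2 * n + 2) := by
      have hsp : qBracket q (n + 1) = qBracket q n + q ^ n := qBracket_succ q n
      have h2n : qBracket q (2 * n + 2)
          = qBracket q (n + 1) + q ^ (n + 1) * qBracket q (n + 1) := by
        rw [show 2 * n + 2 = (n + 1) + (n + 1) by ring, qBracket_add]
      have hp2 : q ^ (2 * n + 2) = q ^ (n + 1) * q ^ (n + 1) := by
        rw [← pow_add]; congr 1; ring
      have hpn1 : q ^ (n + 1) = q * q ^ n := by ring
      have hrel : q * qBracket q n + 1 = qBracket q n + q ^ n := by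
        rw [← qBracket_succ' q n, qBracket_succ]
      simp only [eeQ, ddQ]
      rw [h2n, hp2, hsp, hpn1]
      linear_combination q ^ n * hq2e' + ω * q ^ n * qBracket q n * hq2d'
        + ω * qBracket q n ^ 2 * hq2a' + qBracket q n * hq2b'
        - a * ω * qBracket q n * hrel
    have h2n2 : (2 * (n + 1)) = 2 * n + 2 := by ring
    have heval : Φ.eval (-(eeQ q ω a' b' d' e' n) / ddQ q a' d' (2 * n))
        = φ.eval (-(eeQ q ω a b d e (n + 1)) / ddQ q a d (2 * (n + 1))) := by
      rw [hΦcomp, eval_comp]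
      congr 1
      rw [show lpoly q ω = C q⁻¹ * X + C (-ω / q) from rfl]
      rw [eval_add, eval_mul, eval_C, eval_X, eval_C, h2n2]
      set Dn : ℂ := ddQ q a d (2 * n + 2) with hDn
      set En : ℂ := eeQ q ω a b d e (n + 1) with hEn
      set D' : ℂ := ddQ q a' d' (2 * n) with hD'
      set E' : ℂ := eeQ q ω a' b' d' e' n with hE'
      have hI1' : q ^ 2 * D' = Dn := hI1 (2 * n)
      have hDne : Dn ≠ 0 := hdd (2 * n + 2)
      have hD'ne : D' ≠ 0 := hdd' (2 * n)
      have hI2' : q ^ 2 * E' = q * En - ω * Dn := hI2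
      clear_value Dn En D' E'
      have hE'eq : E' = (q * En - ω * Dn) / q ^ 2 := by
        rw [eq_div_iff (pow_ne_zero 2 hq0)]
        linear_combination hI2'
      have hD'eq : D' = Dn / q ^ 2 := by
        rw [eq_div_iff (pow_ne_zero 2 hq0)]
        linear_combination hI1'
      rw [hE'eq, hD'eq]
      field_simp
      ring
    rw [← heval]
    exact hIH


end Aux

theorem stmt_3 (q ω : ℂ) (hq0 : q ≠ 0) (hqω : q ≠ 1 ∨ ω ≠ 0)
    (hqr : ∀ n : ℕ, 0 < n → q ^ n = 1 → q = 1)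
    (a b c d e : ℂ) (φ ψ : Polynomial ℂ)
    (hφ : φ = C a * X ^ 2 + C b * X + C c) (hψ : ψ = C d * X + C e)
    (hne : φ ≠ 0 ∨ ψ ≠ 0)
    (Dstar : Polynomial ℂ →ₗ[ℂ] Polynomial ℂ) (hDstar : IsHahn q⁻¹ (-ω / q) Dstar)
    (u : PDual) (hu : u ≠ 0)
    (heq : hahnDual q Dstar (pMul φ u) = pMul ψ u)
    (hreg : IsRegularFunc u) :
    ∀ n : ℕ, ddQ q a d n ≠ 0 ∧
      φ.eval (-(eeQ q ω a b d e n) / ddQ q a d (2 * n)) ≠ 0 := by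
  obtain ⟨P, hP1, hP2, hP3⟩ := hreg
  have hqq : q * q⁻¹ = 1 := mul_inv_cancel₀ hq0
  have hP : ∀ f, u (φ * Dstar f) = -q * u (ψ * f) := by
    intro f
    have h := LinearMap.congr_fun heq f
    simp only [hahnDual, LinearMap.smul_apply, LinearMap.comp_apply, pMul,
      LinearMap.mulLeft_apply, smul_eq_mul] at h
    linear_combination (-q) * h + (-(u (φ * Dstar f))) * hqq
  have hdd : ∀ k, ddQ q a d k ≠ 0 :=
    fun k => stepA hq0 hqω hDstar hφ hψ hP1 hP2 hP3 hP hne hqr k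
  intro n
  exact ⟨hdd n,
    lemmaB hq0 hqω hqr hDstar n a b c d e φ ψ hφ hψ hne u P hP1 hP2 hP3 hP hdd⟩

end HahnOPSPaper
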